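/- The limit of the generalized continued fraction K_{n=1}^∞ (1/n)/1, i.e. the limit as N→∞ of the finite continued fraction with partial numerators b_n = 1/n and partial denominators a_n = 1, equals e - 2. -/

import Mathlib

open Real Filter

/-- Finite continued fraction approximant of depth `N`:
`cf b a N = b 1 / (a 1 + b 2 / (a 2 + ... + b N / a N))`. -/
noncomputable def cf (b a : ℕ → ℝ) (N : ℕ) : ℝ :=
  (List.range N).foldr (fun i acc => b (i + 1) / (a (i + 1) + acc)) 0

/-- Partial sums of the series for `exp (-1)`. -/
noncomputable def cfT (n : ℕ) : ℝ := ∑ k ∈ Finset.range (n + 1), (-1 : ℝ) ^ k / k.factorial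

/-- Continuant denominators, in closed form. -/
noncomputable def cfQ (n : ℕ) : ℝ := ((n : ℝ) + 1) * cfT n + (-1) ^ (n + 1) / n.factorial

/-- Continuant numerators. -/
noncomputable def cfP (n : ℕ) : ℝ := ((n : ℝ) + 1) - 2 * cfQ n

lemma cfT_succ (n : ℕ) : cfT (n + 1) = cfT n + (-1) ^ (n + 1) / (n + 1).factorial := by
  simp [cfT, Finset.sum_range_succ]

lemma cfQ_zero : cfQ 0 = 0 := by simp [cfQ, cfT]
lemma cfQ_one : cfQ 1 = 1 := by
  norm_num [cfQ, cfT, Finset.sum_range_succ]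

lemma cfQ_rec (n : ℕ) : cfQ (n + 2) = cfQ (n + 1) + cfQ n / ((n : ℝ) + 1) := by
  have hf : ∀ m : ℕ, ((m.factorial : ℝ)) ≠ 0 := fun m => by
    exact_mod_cast m.factorial_ne_zero
  simp only [cfQ, cfT_succ]
  have h2 : ((n + 2).factorial : ℝ) = ((n : ℝ) + 2) * (n + 1).factorial := by
    rw [Nat.factorial_succ]; push_cast; ring
  have h1 : ((n + 1).factorial : ℝ) = ((n : ℝ) + 1) * n.factorial := by
    rw [Nat.factorial_succ]; push_cast; ring
  have hn1 : ((n : ℝ) + 1) ≠ 0 := by positivity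
  push_cast
  rw [h2, h1]
  field_simp
  ring

lemma cfQ_nonneg : ∀ n, 0 ≤ cfQ n ∧ 1 ≤ cfQ (n + 1) := by
  intro n
  induction n with
  | zero => simp [cfQ_zero, cfQ_one]
  | succ m ih =>
    obtain ⟨h0, h1⟩ := ih
    have hrec := cfQ_rec m
    have hpos : (0 : ℝ) < (m : ℝ) + 1 := by positivity
    constructor
    · linarith
    · have : 0 ≤ cfQ m / ((m : ℝ) + 1) := div_nonneg h0 hpos.le
      rw [hrec]; linarith

lemma cfP_zero : cfP 0 = 1 := by simp [cfP, cfQ_zero]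
lemma cfP_one : cfP 1 = 0 := by norm_num [cfP, cfQ_one]

lemma cfP_rec (n : ℕ) : cfP (n + 2) = cfP (n + 1) + cfP n / ((n : ℝ) + 1) := by
  have hn1 : ((n : ℝ) + 1) ≠ 0 := by positivity
  simp only [cfP, cfQ_rec n]
  push_cast
  field_simp
  ring

lemma foldr_cf (N : ℕ) : ∀ x : ℝ, 0 ≤ x →
    (List.range N).foldr
      (fun (i : ℕ) (acc : ℝ) => 1 / (((i + 1 : ℕ)) : ℝ) / (1 + acc)) x
      = (cfP (N + 1) + x * cfP N) / (cfQ (N + 1) + x * cfQ N) := by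
  induction N with
  | zero =>
    intro x hx
    simp [cfP_zero, cfP_one, cfQ_zero, cfQ_one]
  | succ N ih =>
    intro x hx
    rw [List.range_succ, List.foldr_append]
    simp only [List.foldr_cons, List.foldr_nil]
    set y : ℝ := 1 / ((N : ℝ) + 1) / (1 + x) with hy
    have hyc : (1 : ℝ) / ((N + 1 : ℕ) : ℝ) / (1 + x) = y := by push_cast [hy]; ring_nf
    have h1x : (0 : ℝ) < 1 + x := by linarith
    have hN1 : (0 : ℝ) < (N : ℝ) + 1 := by positivity
    have hy0 : 0 ≤ y := by positivity
    rw [hyc, ih y hy0]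
    -- denominators positive
    obtain ⟨hQ0, hQ1⟩ := cfQ_nonneg N
    obtain ⟨hQ0', hQ1'⟩ := cfQ_nonneg (N + 1)
    have hd1 : (0 : ℝ) < cfQ (N + 1) + y * cfQ N := by nlinarith
    have hd2 : (0 : ℝ) < cfQ (N + 2) + x * cfQ (N + 1) := by nlinarith
    rw [div_eq_div_iff hd1.ne' hd2.ne']
    have hP2 := cfP_rec N
    have hQ2 := cfQ_rec N
    rw [hP2, hQ2, hy]
    field_simp
    ring

lemma cf_eq (N : ℕ) :
    cf (fun n => 1 / (n : ℝ)) (fun _ => 1) N = cfP (N + 1) / cfQ (N + 1) := by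
  rw [cf]
  exact (foldr_cf N 0 le_rfl).trans (by simp)

theorem cf_one_over_n :
    Tendsto (cf (fun n => 1 / (n : ℝ)) (fun _ => 1)) atTop
      (nhds (Real.exp 1 - 2)) := by
  -- the ratio Q(N+1)/(N+2) tends to exp (-1)
  have hT : Tendsto (fun N : ℕ => cfT (N + 1)) atTop (nhds (Real.exp (-1))) := by
    have hsum : HasSum (fun k : ℕ => (-1 : ℝ) ^ k / k.factorial) (Real.exp (-1)) := by
      rw [Real.exp_eq_exp_ℝ]
      exact NormedSpace.expSeries_div_hasSum_exp (-1 : ℝ)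
    have h := hsum.tendsto_sum_nat
    have h2 : Tendsto (fun N : ℕ => N + 2) atTop atTop := tendsto_add_atTop_nat 2
    exact h.comp h2
  have herr : Tendsto (fun N : ℕ => (-1 : ℝ) ^ (N + 2) / (((N : ℝ) + 2) * (N + 1).factorial))
      atTop (nhds 0) := by
    refine squeeze_zero_norm (a := fun N : ℕ => 1 / ((N : ℝ) + 1)) (fun N => ?_)
      tendsto_one_div_add_atTop_nhds_zero_nat
    · have hfac : (1 : ℝ) ≤ ((N + 1).factorial : ℝ) := by
        exact_mod_cast (N + 1).factorial_pos
      have hpos : (0 : ℝ) < ((N : ℝ) + 2) * (N + 1).factorial := by positivity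
      rw [norm_div, norm_pow, norm_neg, norm_one, one_pow]
      rw [Real.norm_eq_abs, abs_of_pos hpos]
      apply one_div_le_one_div_of_le (by positivity)
      nlinarith
  have hR : Tendsto (fun N : ℕ => cfQ (N + 1) / ((N : ℝ) + 2)) atTop (nhds (Real.exp (-1))) := by
    have heq : ∀ N : ℕ, cfQ (N + 1) / ((N : ℝ) + 2)
        = cfT (N + 1) + (-1 : ℝ) ^ (N + 2) / (((N : ℝ) + 2) * (N + 1).factorial) := by
      intro N
      have h2 : ((N : ℝ) + 2) ≠ 0 := by positivity
      have hf : ((N + 1).factorial : ℝ) ≠ 0 := by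
        exact_mod_cast (N + 1).factorial_ne_zero
      simp only [cfQ]
      push_cast
      field_simp
      ring
    simp only [heq]
    simpa using hT.add herr
  have hne : Real.exp (-1) ≠ 0 := Real.exp_ne_zero _
  have hinv : Tendsto (fun N : ℕ => ((N : ℝ) + 2) / cfQ (N + 1)) atTop (nhds (Real.exp 1)) := by
    have := hR.inv₀ hne
    have hval : (Real.exp (-1))⁻¹ = Real.exp 1 := by
      rw [Real.exp_neg]; simp
    rw [hval] at this
    refine this.congr (fun N => ?_)
    rw [inv_div]
  have hfin : Tendsto (fun N : ℕ => ((N : ℝ) + 2) / cfQ (N + 1) - 2) atTop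
      (nhds (Real.exp 1 - 2)) := hinv.sub_const 2
  refine hfin.congr (fun N => ?_)
  have h1 : 1 ≤ cfQ (N + 1) := (cfQ_nonneg N).2
  have hQne : cfQ (N + 1) ≠ 0 := by linarith
  rw [cf_eq N]
  simp only [cfP]
  push_cast
  field_simp
  ring
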